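/- If n ≥ 2 and |T| ≤ 3, then every nonempty cell V_T(S) is unbounded. -/

import Mathlib

open Finset Metric
open scoped Classical

/-- The multipoint (higher-order) Voronoi cell of `S` within the set of sites `T`. -/
def vcell {n : ℕ} (T S : Finset (EuclideanSpace ℝ (Fin n))) :
    Set (EuclideanSpace ℝ (Fin n)) :=
  {x | ∀ s ∈ S, ∀ t ∈ T \ S, dist x s ≤ dist x t}

open scoped RealInnerProductSpace

/-- In dimension ≥ 2, any vector admits a nonzero orthogonal vector. -/
lemma exists_ortho {n : ℕ} (hn : 2 ≤ n) (d : EuclideanSpace ℝ (Fin n)) :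
    ∃ w : EuclideanSpace ℝ (Fin n), w ≠ 0 ∧ (inner ℝ w (d) : ℝ) = 0 := by
  have hfr : Module.finrank ℝ (EuclideanSpace ℝ (Fin n)) = n := by
    simp [finrank_euclideanSpace]
  have h1 : Module.finrank ℝ (ℝ ∙ d) ≤ 1 := by
    have := finrank_span_le_card (R := ℝ) ({d} : Set (EuclideanSpace ℝ (Fin n)))
    simpa using this
  have h2 : Module.finrank ℝ (ℝ ∙ d) + Module.finrank ℝ (ℝ ∙ d)ᗮ
      = Module.finrank ℝ (EuclideanSpace ℝ (Fin n)) :=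
    Submodule.finrank_add_finrank_orthogonal _
  have hpos : 0 < Module.finrank ℝ (ℝ ∙ d)ᗮ := by omega
  have hne : (ℝ ∙ d)ᗮ ≠ ⊥ := by
    intro h
    rw [h] at hpos
    simp at hpos
  obtain ⟨w, hw, hw0⟩ := Submodule.exists_mem_ne_zero_of_ne_bot hne
  exact ⟨w, hw0, Submodule.mem_orthogonal' _ _ |>.1 hw d (Submodule.mem_span_singleton_self d)⟩

/-- There is a nonzero vector making nonpositive inner product with any two given vectors. -/
lemma exists_dir {n : ℕ} (hn : 2 ≤ n) (d₁ d₂ : EuclideanSpace ℝ (Fin n)) :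
    ∃ v : EuclideanSpace ℝ (Fin n), v ≠ 0 ∧ (inner ℝ v (d₁) : ℝ) ≤ 0 ∧ (inner ℝ v (d₂) : ℝ) ≤ 0 := by
  obtain ⟨w, hw0, hw⟩ := exists_ortho hn d₁
  by_cases h : (inner ℝ w (d₂) : ℝ) ≤ 0
  · exact ⟨w, hw0, le_of_eq hw, h⟩
  · refine ⟨-w, neg_ne_zero.2 hw0, ?_, ?_⟩
    · rw [inner_neg_left, hw]; simp
    · rw [inner_neg_left]; linarith

lemma ray_mem {n : ℕ} {T S : Finset (EuclideanSpace ℝ (Fin n))}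
    {x₀ v : EuclideanSpace ℝ (Fin n)} (hx : x₀ ∈ vcell T S)
    (hv : ∀ s ∈ S, ∀ t ∈ T \ S, (inner ℝ v (t - s) : ℝ) ≤ 0) {τ : ℝ} (hτ : 0 ≤ τ) :
    x₀ + τ • v ∈ vcell T S := by
  intro s hs t ht
  have h1 : dist x₀ s ≤ dist x₀ t := hx s hs t ht
  have h2 : (inner ℝ v (t - s) : ℝ) ≤ 0 := hv s hs t ht
  have hds : 0 ≤ dist x₀ s := dist_nonneg
  have hdt : 0 ≤ dist x₀ t := dist_nonneg
  have e1 : dist (x₀ + τ • v) s ^ 2 ≤ dist (x₀ + τ • v) t ^ 2 := by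
    have es : x₀ + τ • v - s = (x₀ - s) + τ • v := by abel
    have et : x₀ + τ • v - t = (x₀ - t) + τ • v := by abel
    rw [dist_eq_norm, dist_eq_norm, es, et, norm_add_sq_real, norm_add_sq_real]
    have hin : (inner ℝ (x₀ - s) (τ • v) : ℝ) ≤ (inner ℝ (x₀ - t) (τ • v) : ℝ) := by
      rw [real_inner_smul_right, real_inner_smul_right]
      apply mul_le_mul_of_nonneg_left _ hτ
      have key : (inner ℝ v (t - s) : ℝ) = (inner ℝ (x₀ - t) v : ℝ) - (inner ℝ (x₀ - s) v : ℝ) + 2 * (inner ℝ v (t - s) : ℝ) := by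
        simp only [inner_sub_left, inner_sub_right]
        rw [real_inner_comm t v, real_inner_comm s v]
        ring
      linarith
    have hsq : dist x₀ s ^ 2 ≤ dist x₀ t ^ 2 := by nlinarith
    rw [dist_eq_norm, dist_eq_norm] at hsq
    linarith
  have : 0 ≤ dist (x₀ + τ • v) t := dist_nonneg
  nlinarith [dist_nonneg (x := x₀ + τ • v) (y := s)]

lemma unbounded_of_dir {n : ℕ} {T S : Finset (EuclideanSpace ℝ (Fin n))}
    {x₀ v : EuclideanSpace ℝ (Fin n)} (hx : x₀ ∈ vcell T S) (hv0 : v ≠ 0)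
    (hv : ∀ s ∈ S, ∀ t ∈ T \ S, (inner ℝ v (t - s) : ℝ) ≤ 0) :
    ¬ Bornology.IsBounded (vcell T S) := by
  intro hb
  obtain ⟨R, hR⟩ := (Metric.isBounded_iff_subset_closedBall x₀).1 hb
  have hvn : 0 < ‖v‖ := norm_pos_iff.2 hv0
  set τ : ℝ := (|R| + 1) / ‖v‖ with hτdef
  have hτ : 0 ≤ τ := by positivity
  have hmem := ray_mem hx hv hτ
  have hd : dist (x₀ + τ • v) x₀ ≤ R := hR hmem
  have hdist : dist (x₀ + τ • v) x₀ = |R| + 1 := by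
    rw [dist_eq_norm]
    have h' : x₀ + τ • v - x₀ = τ • v := by abel
    rw [h', norm_smul, Real.norm_of_nonneg hτ, hτdef]
    field_simp
  rw [hdist] at hd
  have := le_abs_self R
  linarith

theorem stmt_7 {n : ℕ} (hn : 2 ≤ n) (T S : Finset (EuclideanSpace ℝ (Fin n)))
    (hT : T.card ≤ 3) (hS : S.Nonempty) (hST : S ⊂ T)
    (hne : (vcell T S).Nonempty) :
    ¬ Bornology.IsBounded (vcell T S) := by
  obtain ⟨x₀, hx⟩ := hne
  have hSsub : S ⊆ T := hST.subset
  have hdne : (T \ S).Nonempty := Finset.sdiff_nonempty.2 hST.not_subset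
  have hc1 : 1 ≤ S.card := hS.card_pos
  have hc2 : 1 ≤ (T \ S).card := hdne.card_pos
  have hcs : S.card + (T \ S).card ≤ 3 := by
    rw [Finset.card_sdiff_of_subset hSsub]
    have := Finset.card_le_card hSsub
    omega
  rcases Nat.lt_or_ge S.card 2 with h | h
  · -- S.card = 1
    obtain ⟨s, hsS⟩ := Finset.card_eq_one.1 (by omega : S.card = 1)
    rcases Nat.lt_or_ge (T \ S).card 2 with h2 | h2
    · -- (T \ S).card = 1
      obtain ⟨t, htT⟩ := Finset.card_eq_one.1 (by omega : (T \ S).card = 1)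
      obtain ⟨v, hv0, hv1, _⟩ := exists_dir hn (t - s) (t - s)
      refine unbounded_of_dir hx hv0 ?_
      intro s' hs' t' ht'
      rw [hsS, Finset.mem_singleton] at hs'
      rw [htT, Finset.mem_singleton] at ht'
      subst hs' ht'
      exact hv1
    · -- (T \ S).card = 2
      obtain ⟨t₁, t₂, _, htT⟩ := Finset.card_eq_two.1 (by omega : (T \ S).card = 2)
      obtain ⟨v, hv0, hv1, hv2⟩ := exists_dir hn (t₁ - s) (t₂ - s)
      refine unbounded_of_dir hx hv0 ?_
      intro s' hs' t' ht'
      rw [hsS, Finset.mem_singleton] at hs'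
      rw [htT, Finset.mem_insert, Finset.mem_singleton] at ht'
      subst hs'
      rcases ht' with rfl | rfl
      · exact hv1
      · exact hv2
  · -- S.card = 2
    obtain ⟨s₁, s₂, _, hsS⟩ := Finset.card_eq_two.1 (by omega : S.card = 2)
    obtain ⟨t, htT⟩ := Finset.card_eq_one.1 (by omega : (T \ S).card = 1)
    obtain ⟨v, hv0, hv1, hv2⟩ := exists_dir hn (t - s₁) (t - s₂)
    refine unbounded_of_dir hx hv0 ?_
    intro s' hs' t' ht'
    rw [hsS, Finset.mem_insert, Finset.mem_singleton] at hs'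
    rw [htT, Finset.mem_singleton] at ht'
    subst ht'
    rcases hs' with rfl | rfl
    · exact hv1
    · exact hv2
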